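/- For ℓ ∈ ½ℕ and integers 0 ≤ k ≤ m ≤ n ≤ 2ℓ, the sum ∑_{t=0}^{m} (-1)^t ((n-2ℓ)_{m-t}/(n+2)_{m-t}) ((2ℓ+2-t)_t/t!) (m+n+1-2t) R_k(λ(t); 0, 0, -m-1, -n-1) equals (-1)^{m+k} ((2ℓ+k+1)! (2ℓ-k)!/(2ℓ+1)!) · (n+1)/(m! (2ℓ-m)!). -/

import Mathlib

/-- Pochhammer symbol (rising factorial) `(a)_k`. -/
noncomputable def poch (a : ℝ) (k : ℕ) : ℝ := ∏ i ∈ Finset.range k, (a + i)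

/-- Racah polynomial `R_k(λ(t);0,0,-m-1,-n-1) = ₄F₃(-k, k+1, -t, t-m-n-1; 1, -m, -n; 1)`. -/
noncomputable def racah (k t m n : ℕ) : ℝ :=
  ∑ s ∈ Finset.range (k+1),
    poch (-(k:ℝ)) s * poch ((k:ℝ)+1) s * poch (-(t:ℝ)) s * poch ((t:ℝ)-m-n-1) s /
      (poch 1 s * poch (-(m:ℝ)) s * poch (-(n:ℝ)) s * (Nat.factorial s : ℝ))


set_option maxHeartbeats 1000000

open Finset Polynomial


lemma poch_zero (a : ℝ) : poch a 0 = 1 := by simp [poch]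

lemma poch_succ (a : ℝ) (k : ℕ) : poch a (k+1) = poch a k * (a + k) := by
  simp [poch, Finset.prod_range_succ]

lemma poch_succ' (a : ℝ) (k : ℕ) : poch a (k+1) = a * poch (a+1) k := by
  rw [poch, Finset.prod_range_succ']
  simp only [Nat.cast_zero, add_zero, mul_comm]
  congr 1
  · apply Finset.prod_congr rfl
    intro i _
    push_cast; ring

lemma poch_add (a : ℝ) (p q : ℕ) : poch a (p+q) = poch a p * poch (a+p) q := by
  rw [poch, Finset.prod_range_add]
  congr 1
  apply Finset.prod_congr rfl
  intro i _
  push_cast; ring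

lemma poch_one (s : ℕ) : poch 1 s = (Nat.factorial s : ℝ) := by
  induction s with
  | zero => simp [poch_zero]
  | succ n ih => rw [poch_succ, ih]; push_cast [Nat.factorial_succ]; ring

/-- `(j+1)_k = (j+k)!/j!` in multiplied form. -/
lemma poch_nat_succ (j k : ℕ) :
    poch ((j:ℝ)+1) k * (Nat.factorial j : ℝ) = (Nat.factorial (j+k) : ℝ) := by
  induction k with
  | zero => simp [poch_zero]
  | succ q ih =>
      rw [poch_succ, show (j:ℝ)+1+q = (j+q:ℕ)+1 by push_cast; ring]
      rw [mul_right_comm, ih, show j+(q+1) = (j+q)+1 by omega]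
      push_cast [Nat.factorial_succ]; ring

lemma poch_neg_nat_mul (M s : ℕ) (h : s ≤ M) :
    poch (-(M:ℝ)) s * (Nat.factorial (M-s) : ℝ) = (-1:ℝ)^s * (Nat.factorial M : ℝ) := by
  induction s with
  | zero => simp [poch_zero]
  | succ q ih =>
      have hq : q ≤ M := by omega
      have h1 : M - q = (M - (q+1)) + 1 := by omega
      have h4 : (-(M:ℝ) + q) = -(((M - (q+1) : ℕ):ℝ) + 1) := by
        have : ((M - (q+1) : ℕ):ℝ) = (M:ℝ) - (q+1) := by
          push_cast [Nat.cast_sub h]; ring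
        rw [this]; ring
      have := ih hq
      rw [h1] at this
      push_cast [Nat.factorial_succ] at this
      rw [poch_succ, h4]
      calc poch (-(M:ℝ)) q * -(((M - (q+1) : ℕ):ℝ) + 1) * (Nat.factorial (M-(q+1)) : ℝ)
          = -(poch (-(M:ℝ)) q * ((((M - (q+1) : ℕ):ℝ) + 1) * (Nat.factorial (M-(q+1)) : ℝ))) := by ring
        _ = -((-1:ℝ)^q * (Nat.factorial M : ℝ)) := by rw [this]
        _ = (-1:ℝ)^(q+1) * (Nat.factorial M : ℝ) := by ring

lemma poch_neg_nat (M s : ℕ) (h : s ≤ M) :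
    poch (-(M:ℝ)) s = (-1:ℝ)^s * (Nat.factorial M : ℝ) / (Nat.factorial (M-s) : ℝ) := by
  have h3 : (Nat.factorial (M-s) : ℝ) ≠ 0 := by exact_mod_cast Nat.factorial_ne_zero _
  rw [eq_div_iff h3, poch_neg_nat_mul M s h]

lemma poch_neg_nat_eq_zero (M s : ℕ) (h : M < s) : poch (-(M:ℝ)) s = 0 := by
  rw [poch]
  apply Finset.prod_eq_zero (Finset.mem_range.2 h)
  simp

lemma poch_pos (a : ℝ) (k : ℕ) (h : 0 < a) : 0 < poch a k := by
  rw [poch]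
  apply Finset.prod_pos
  intro i _
  positivity

lemma poch_eval (a : ℝ) (k : ℕ) : poch a k = ∏ i ∈ Finset.range k, (a + i) := rfl

lemma poch_congr {a b : ℝ} (k : ℕ) (h : a = b) : poch a k = poch b k := by rw [h]

lemma saalschutz_eval (k j : ℕ) (hj : j ≤ k) :
    ∑ s ∈ range (k+1),
      poch (-(k:ℝ)) s * poch ((k:ℝ)+1) s / ((Nat.factorial s : ℝ))^2
        * poch (((j:ℝ)-1) - k + 1) (k-s) * poch (((j:ℝ)-1) - s + 2) s
    = (-1:ℝ)^k * poch (((j:ℝ)-1)+2) k := by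
  obtain ⟨d, rfl⟩ : ∃ d, k = j + d := ⟨k - j, by omega⟩
  rw [Finset.sum_eq_single j]
  · have h1 : poch (((j:ℝ)-1) - (j+d:ℕ) + 1) ((j+d)-j) = (-1:ℝ)^d * (Nat.factorial d : ℝ) := by
      rw [show (j+d)-j = d by omega,
        poch_congr (a := ((j:ℝ)-1) - (j+d:ℕ) + 1) (b := -((d:ℕ):ℝ)) d (by push_cast; ring),
        poch_neg_nat d d le_rfl]
      have : (Nat.factorial (d-d) : ℝ) = 1 := by simp [Nat.sub_self]
      rw [this]; ring
    have h2 : poch (((j:ℝ)-1) - (j:ℕ) + 2) j = (Nat.factorial j : ℝ) := by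
      rw [poch_congr (a := ((j:ℝ)-1) - (j:ℕ) + 2) (b := 1) j (by push_cast; ring), poch_one]
    have h3 : poch (-((j+d:ℕ):ℝ)) j
        = (-1:ℝ)^j * (Nat.factorial (j+d) : ℝ) / (Nat.factorial d : ℝ) := by
      rw [poch_neg_nat (j+d) j (by omega)]
      congr 3
      omega
    have hfd : (Nat.factorial d : ℝ) ≠ 0 := by exact_mod_cast Nat.factorial_ne_zero _
    have hfj : (Nat.factorial j : ℝ) ≠ 0 := by exact_mod_cast Nat.factorial_ne_zero _
    have hfjd : (Nat.factorial (j+d) : ℝ) ≠ 0 := by exact_mod_cast Nat.factorial_ne_zero _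
    have p1 : poch (((j+d:ℕ):ℝ)+1) j = (Nat.factorial (j+d+j) : ℝ) / (Nat.factorial (j+d):ℝ) := by
      rw [eq_div_iff hfjd]; exact poch_nat_succ (j+d) j
    have p2 : poch (((j:ℝ)-1)+2) (j+d) = (Nat.factorial (j+(j+d)) : ℝ) / (Nat.factorial j : ℝ) := by
      rw [poch_congr (a := ((j:ℝ)-1)+2) (b := ((j:ℕ):ℝ)+1) (j+d) (by push_cast; ring),
        eq_div_iff hfj]
      exact poch_nat_succ j (j+d)
    have e7 : (Nat.factorial (j+d+j) : ℝ) = (Nat.factorial (j+(j+d)) : ℝ) := by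
      rw [show j+d+j = j+(j+d) from by omega]
    rw [h1, h2, p2]
    rw [show poch (-((j+d:ℕ):ℝ)) j * poch (((j+d:ℕ):ℝ)+1) j / ((Nat.factorial j : ℝ))^2
          * ((-1:ℝ)^d * (Nat.factorial d : ℝ)) * (Nat.factorial j : ℝ)
        = poch (-((j+d:ℕ):ℝ)) j * poch (((j+d:ℕ):ℝ)+1) j / ((Nat.factorial j : ℝ))^2
          * ((-1:ℝ)^d * (Nat.factorial d : ℝ)) * (Nat.factorial j : ℝ) from rfl]
    rw [h3, p1, e7]
    field_simp
    ring
  · intro s hs hsj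
    rw [mem_range] at hs
    rcases lt_or_gt_of_ne hsj with hlt | hgt
    · have hz : poch (((j:ℝ)-1) - (j+d:ℕ) + 1) ((j+d)-s) = 0 := by
        rw [poch_eval]
        apply Finset.prod_eq_zero (i := d)
        · rw [mem_range]; omega
        · push_cast; ring
      rw [hz]; ring
    · have hz : poch (((j:ℝ)-1) - (s:ℕ) + 2) s = 0 := by
        rw [poch_eval]
        apply Finset.prod_eq_zero (i := s - j - 1)
        · rw [mem_range]; omega
        · have : ((s - j - 1 : ℕ) : ℝ) = (s:ℝ) - j - 1 := by
            rw [Nat.cast_sub (show 1 ≤ s - j by omega), Nat.cast_sub (show j ≤ s by omega)]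
            norm_num
          rw [this]; ring
      rw [hz]; ring
  · intro h
    exact absurd (mem_range.2 (by omega)) h

lemma saalschutz (k : ℕ) (x : ℝ) :
    ∑ s ∈ range (k+1),
      poch (-(k:ℝ)) s * poch ((k:ℝ)+1) s / ((Nat.factorial s : ℝ))^2
        * poch (x - k + 1) (k-s) * poch (x - s + 2) s
    = (-1:ℝ)^k * poch (x+2) k := by
  classical
  set P : ℝ[X] := ∑ s ∈ range (k+1),
      C (poch (-(k:ℝ)) s * poch ((k:ℝ)+1) s / ((Nat.factorial s : ℝ))^2)
        * ((∏ i ∈ range (k-s), (X + C ((1:ℝ) - k + i)))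
        * (∏ i ∈ range s, (X + C ((2:ℝ) - s + i)))) with hP
  set R : ℝ[X] := C ((-1:ℝ)^k) * ∏ i ∈ range k, (X + C ((2:ℝ) + i)) with hR
  have evalP : ∀ y : ℝ, P.eval y = ∑ s ∈ range (k+1),
      poch (-(k:ℝ)) s * poch ((k:ℝ)+1) s / ((Nat.factorial s : ℝ))^2
        * poch (y - k + 1) (k-s) * poch (y - s + 2) s := by
    intro y
    rw [hP, eval_finset_sum]
    apply Finset.sum_congr rfl
    intro s _
    rw [eval_mul, eval_mul, eval_C, eval_prod, eval_prod, poch_eval, poch_eval, mul_assoc]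
    congr 1
    congr 1
    · exact Finset.prod_congr rfl fun i _ => by rw [eval_add, eval_X, eval_C]; ring
    · exact Finset.prod_congr rfl fun i _ => by rw [eval_add, eval_X, eval_C]; ring
  have evalR : ∀ y : ℝ, R.eval y = (-1:ℝ)^k * poch (y+2) k := by
    intro y
    rw [hR, eval_mul, eval_C, eval_prod, poch_eval]
    congr 1
    exact Finset.prod_congr rfl fun i _ => by rw [eval_add, eval_X, eval_C]; ring
  have key : P = R := by
    have hdegP : P.natDegree ≤ k := by
      apply Polynomial.natDegree_sum_le_of_forall_le
      intro s hs
      rw [mem_range] at hs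
      calc (C (poch (-(k:ℝ)) s * poch ((k:ℝ)+1) s / ((Nat.factorial s : ℝ))^2)
              * ((∏ i ∈ range (k-s), (X + C ((1:ℝ) - k + i)))
              * (∏ i ∈ range s, (X + C ((2:ℝ) - s + i))))).natDegree
          ≤ ((∏ i ∈ range (k-s), (X + C ((1:ℝ) - k + i)))
              * (∏ i ∈ range s, (X + C ((2:ℝ) - s + i)))).natDegree :=
            natDegree_C_mul_le _ _
        _ ≤ (∏ i ∈ range (k-s), (X + C ((1:ℝ) - k + i))).natDegree
              + (∏ i ∈ range s, (X + C ((2:ℝ) - s + i))).natDegree := natDegree_mul_le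
        _ ≤ (∑ i ∈ range (k-s), (X + C ((1:ℝ) - k + (i:ℕ))).natDegree)
              + (∑ i ∈ range s, (X + C ((2:ℝ) - s + (i:ℕ))).natDegree) :=
            Nat.add_le_add (natDegree_prod_le _ _) (natDegree_prod_le _ _)
        _ ≤ (∑ _i ∈ range (k-s), 1) + (∑ _i ∈ range s, 1) := by
            apply Nat.add_le_add <;>
              (apply Finset.sum_le_sum; intro i _; exact le_of_eq (natDegree_X_add_C _))
        _ = (k-s) + s := by simp
        _ ≤ k := by omega
    have hdegR : R.natDegree ≤ k := by
      calc R.natDegree ≤ (∏ i ∈ range k, (X + C ((2:ℝ) + i))).natDegree :=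
            natDegree_C_mul_le _ _
        _ ≤ ∑ i ∈ range k, (X + C ((2:ℝ) + (i:ℕ))).natDegree := natDegree_prod_le _ _
        _ ≤ ∑ _i ∈ range k, 1 := by
            apply Finset.sum_le_sum; intro i _; exact le_of_eq (natDegree_X_add_C _)
        _ = k := by simp
    have heval : ∀ j : Fin (k+1), (P - R).eval (((j:ℕ):ℝ) - 1) = 0 := by
      intro j
      rw [eval_sub, evalP, evalR, sub_eq_zero]
      exact saalschutz_eval k (j:ℕ) (by omega)
    have hcard : (P - R).natDegree < Fintype.card (Fin (k+1)) := by
      rw [Fintype.card_fin]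
      exact lt_of_le_of_lt (le_trans (natDegree_sub_le _ _) (max_le hdegP hdegR))
        (Nat.lt_succ_self k)
    have hinj : Function.Injective (fun j : Fin (k+1) => ((j:ℕ):ℝ) - 1) := by
      intro a b hab
      simp only at hab
      have : ((a:ℕ):ℝ) = ((b:ℕ):ℝ) := by linarith
      exact Fin.ext (Nat.cast_injective this)
    have h0 := Polynomial.eq_zero_of_natDegree_lt_card_of_eval_eq_zero (P - R) hinj heval hcard
    have := sub_eq_zero.mp h0
    exact this
  calc ∑ s ∈ range (k+1),
      poch (-(k:ℝ)) s * poch ((k:ℝ)+1) s / ((Nat.factorial s : ℝ))^2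
        * poch (x - k + 1) (k-s) * poch (x - s + 2) s = P.eval x := (evalP x).symm
    _ = R.eval x := by rw [key]
    _ = (-1:ℝ)^k * poch (x+2) k := evalR x

lemma poch_nat_div (j k : ℕ) :
    poch ((j:ℝ)+1) k = (Nat.factorial (j+k) : ℝ) / (Nat.factorial j : ℝ) := by
  rw [eq_div_iff (by exact_mod_cast Nat.factorial_ne_zero j : (Nat.factorial j:ℝ) ≠ 0)]
  exact poch_nat_succ j k

/-- The summand of the inner `t`-sum, for fixed `s`. -/
noncomputable def fterm (s m n L t : ℕ) : ℝ :=
  (-1:ℝ)^t * (poch ((n:ℝ) - L) (m-t) / poch ((n:ℝ)+2) (m-t))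
    * (poch ((L:ℝ)+2-t) t / (Nat.factorial t : ℝ))
    * ((m:ℝ)+n+1-2*t) * (poch (-(t:ℝ)) s * poch ((t:ℝ)-m-n-1) s)

/-- Closed form of the partial sums. -/
noncomputable def gclosed (s m n L T : ℕ) : ℝ :=
  (-1:ℝ)^T * ((n:ℝ)+1) * (Nat.factorial n : ℝ)
    / ((Nat.factorial (n+m-s-T) : ℝ) * (Nat.factorial (T-s) : ℝ))
    * (poch ((L:ℝ)-T+1) (T+1) / ((L:ℝ)-s+1)) * poch ((n:ℝ)-L) (m-T)

lemma fterm_eq_zero (s m n L t : ℕ) (h : t < s) : fterm s m n L t = 0 := by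
  rw [fterm, poch_neg_nat_eq_zero t s h]
  ring

lemma gsum (s : ℕ) : ∀ (u m n L : ℕ), s+u ≤ m → m ≤ n → n ≤ L →
    ∑ t ∈ range (s+u+1), fterm s m n L t = gclosed s m n L (s+u) := by
  intro u
  induction u with
  | zero =>
      intro m n L h1 hmn hnL
      simp only [Nat.add_zero] at h1 ⊢
      obtain ⟨v, rfl⟩ : ∃ v, m = s + v := ⟨m - s, by omega⟩
      obtain ⟨w, rfl⟩ : ∃ w, n = s + v + w := ⟨n - (s+v), by omega⟩
      obtain ⟨z, rfl⟩ : ∃ z, L = s + v + w + z := ⟨L - (s+v+w), by omega⟩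
      rw [Finset.sum_range_succ,
        Finset.sum_eq_zero (fun t ht => fterm_eq_zero s _ _ _ t (mem_range.1 ht)), zero_add]
      rw [fterm, gclosed]
      rw [show s + v - s = v by omega, show s + v + w + (s+v) - s - s = 2*v+w by omega,
        show s - s = 0 by omega]
      rw [poch_neg_nat s s le_rfl, show s - s = 0 by omega]
      rw [poch_congr (a := (s:ℝ) - (s+v:ℕ) - (s+v+w:ℕ) - 1) (b := -((s+2*v+w+1:ℕ):ℝ)) s
        (by push_cast; ring)]
      rw [poch_neg_nat (s+2*v+w+1) s (by omega), show s+2*v+w+1-s = 2*v+w+1 by omega]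
      rw [poch_congr (a := ((s+v+w:ℕ):ℝ)+2) (b := ((s+v+w+1:ℕ):ℝ)+1) v (by push_cast; ring),
        poch_nat_div (s+v+w+1) v]
      rw [poch_succ' (((s+v+w+z:ℕ):ℝ) - ((s:ℕ):ℝ) + 1) s]
      rw [poch_congr (a := ((s+v+w+z:ℕ):ℝ)+2-((s:ℕ):ℝ))
        (b := ((s+v+w+z:ℕ):ℝ) - ((s:ℕ):ℝ) + 1 + 1) s (by push_cast; ring)]
      rw [show s+v+w+1+v = s+2*v+w+1 from by omega]
      rw [show ((s+v+w+z:ℕ):ℝ) - ((s:ℕ):ℝ) + 1 = (v:ℝ)+w+z+1 from by push_cast; ring]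
      have hf1 : (Nat.factorial s : ℝ) ≠ 0 := by exact_mod_cast Nat.factorial_ne_zero _
      have hf2 : (Nat.factorial (2*v+w) : ℝ) ≠ 0 := by exact_mod_cast Nat.factorial_ne_zero _
      have hf4 : (Nat.factorial (s+2*v+w+1) : ℝ) ≠ 0 := by exact_mod_cast Nat.factorial_ne_zero _
      have hf6 : (Nat.factorial (s+v+w) : ℝ) ≠ 0 := by exact_mod_cast Nat.factorial_ne_zero _
      have hL : ((v:ℝ))+w+z+1 ≠ 0 := by positivity
      rw [show Nat.factorial (2*v+w+1) = (2*v+w+1) * Nat.factorial (2*v+w) from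
          Nat.factorial_succ _,
        show Nat.factorial (s+v+w+1) = (s+v+w+1) * Nat.factorial (s+v+w) from Nat.factorial_succ _]
      rcases Nat.even_or_odd s with hs | hs
      · rw [Even.neg_one_pow hs]
        push_cast
        field_simp
        ring
      · rw [Odd.neg_one_pow hs]
        push_cast
        field_simp
        ring
  | succ u ih =>
      intro m n L h1 hmn hnL
      rw [show s+(u+1)+1 = (s+u+1)+1 from rfl, Finset.sum_range_succ,
        ih m n L (by omega) hmn hnL]
      obtain ⟨v, rfl⟩ : ∃ v, m = s + u + 1 + v := ⟨m - (s+u+1), by omega⟩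
      obtain ⟨w, rfl⟩ : ∃ w, n = s + u + 1 + v + w := ⟨n - (s+u+1+v), by omega⟩
      obtain ⟨z, rfl⟩ : ∃ z, L = s + u + 1 + v + w + z := ⟨L - (s+u+1+v+w), by omega⟩
      rw [fterm, gclosed, gclosed]
      rw [show s+u+1+v - (s+u+1) = v by omega,
        show s+u+1+v+w + (s+u+1+v) - s - (s+u) = u+2*v+w+2 by omega,
        show s+u - s = u by omega,
        show s+u+1+v - (s+u) = v+1 by omega,
        show s+u+1+v+w + (s+u+1+v) - s - (s+(u+1)) = u+2*v+w+1 by omega,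
        show s+(u+1) - s = u+1 by omega,
        show s+u+1+v - (s+(u+1)) = v by omega]
      rw [poch_neg_nat (s+u+1) s (by omega), show s+u+1-s = u+1 by omega]
      rw [poch_congr (a := ((s+u+1:ℕ):ℝ) - (s+u+1+v:ℕ) - (s+u+1+v+w:ℕ) - 1)
        (b := -((s+u+2*v+w+2:ℕ):ℝ)) s (by push_cast; ring)]
      rw [poch_neg_nat (s+u+2*v+w+2) s (by omega),
        show s+u+2*v+w+2-s = u+2*v+w+2 by omega]
      rw [poch_congr (a := ((s+u+1+v+w:ℕ):ℝ)+2) (b := ((s+u+1+v+w+1:ℕ):ℝ)+1) v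
        (by push_cast; ring), poch_nat_div (s+u+1+v+w+1) v]
      rw [show s+u+1+v+w+1+v = s+u+2*v+w+2 from by omega]
      rw [poch_congr (a := ((s+u+1+v+w+z:ℕ):ℝ)+2-((s+u+1:ℕ):ℝ))
        (b := ((s+u+1+v+w+z:ℕ):ℝ) - ((s+u:ℕ):ℝ) + 1) (s+u+1) (by push_cast; ring)]
      rw [poch_succ (((s+u+1+v+w:ℕ):ℝ) - ((s+u+1+v+w+z:ℕ):ℝ)) v]
      rw [show s+(u+1)+1 = (s+u+1)+1 from rfl]
      rw [poch_succ' (((s+u+1+v+w+z:ℕ):ℝ) - ((s+(u+1):ℕ):ℝ) + 1) (s+u+1)]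
      rw [poch_congr (a := ((s+u+1+v+w+z:ℕ):ℝ) - ((s+(u+1):ℕ):ℝ) + 1 + 1)
        (b := ((s+u+1+v+w+z:ℕ):ℝ) - ((s+u:ℕ):ℝ) + 1) (s+u+1) (by push_cast; ring)]
      rw [show ((s+u+1+v+w+z:ℕ):ℝ) - ((s:ℕ):ℝ) + 1 = (u:ℝ)+v+w+z+2 from by push_cast; ring]
      have hf1 : (Nat.factorial (s+u+1) : ℝ) ≠ 0 := by exact_mod_cast Nat.factorial_ne_zero _
      have hf3 : (Nat.factorial u : ℝ) ≠ 0 := by exact_mod_cast Nat.factorial_ne_zero _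
      have hf5 : (Nat.factorial (u+2*v+w+1) : ℝ) ≠ 0 := by exact_mod_cast Nat.factorial_ne_zero _
      have hf6 : (Nat.factorial (s+u+2*v+w+2) : ℝ) ≠ 0 := by exact_mod_cast Nat.factorial_ne_zero _
      have hf8 : (Nat.factorial (s+u+1+v+w) : ℝ) ≠ 0 := by exact_mod_cast Nat.factorial_ne_zero _
      have hL : ((u:ℝ))+v+w+z+2 ≠ 0 := by positivity
      rw [show Nat.factorial (u+2*v+w+2) = (u+2*v+w+2) * Nat.factorial (u+2*v+w+1) from
          Nat.factorial_succ _,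
        show Nat.factorial (u+1) = (u+1) * Nat.factorial u from Nat.factorial_succ _,
        show Nat.factorial (s+u+1+v+w+1) = (s+u+1+v+w+1) * Nat.factorial (s+u+1+v+w) from
          Nat.factorial_succ _]
      rw [show ((-1:ℝ))^(s+u) = (-1:ℝ)^s*(-1:ℝ)^u from pow_add _ _ _,
        show ((-1:ℝ))^(s+u+1) = -((-1:ℝ)^s*(-1:ℝ)^u) from by rw [pow_succ, pow_add]; ring,
        show ((-1:ℝ))^(s+(u+1)) = -((-1:ℝ)^s*(-1:ℝ)^u) from by
          rw [show s+(u+1) = s+u+1 from rfl, pow_succ, pow_add]; ring]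
      rcases Nat.even_or_odd s with hs | hs <;> rcases Nat.even_or_odd u with hu | hu
      · rw [Even.neg_one_pow hs, Even.neg_one_pow hu]; push_cast; field_simp; ring
      · rw [Even.neg_one_pow hs, Odd.neg_one_pow hu]; push_cast; field_simp; ring
      · rw [Odd.neg_one_pow hs, Even.neg_one_pow hu]; push_cast; field_simp; ring
      · rw [Odd.neg_one_pow hs, Odd.neg_one_pow hu]; push_cast; field_simp; ring

/-- Lemma A.1: the Racah-polynomial summation. Here `L = 2ℓ` is a nonnegative integer. -/
theorem racah_sum (L k m n : ℕ) (hkm : k ≤ m) (hmn : m ≤ n) (hnL : n ≤ L) :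
    ∑ t ∈ Finset.range (m+1),
      (-1:ℝ)^t * (poch ((n:ℝ) - L) (m-t) / poch ((n:ℝ)+2) (m-t))
        * (poch ((L:ℝ)+2-t) t / (Nat.factorial t : ℝ))
        * ((m:ℝ)+n+1-2*t) * racah k t m n =
    (-1:ℝ)^(m+k) * ((Nat.factorial (L+k+1) : ℝ) * (Nat.factorial (L-k) : ℝ)
        / (Nat.factorial (L+1) : ℝ))
      * ((n:ℝ)+1) / ((Nat.factorial m : ℝ) * (Nat.factorial (L-m) : ℝ)) := by
  have hLs : ∀ s : ℕ, s ≤ m → ((L:ℝ) - s + 1) ≠ 0 := by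
    intro s hs
    have : ((L:ℝ) - s + 1) = ((L - s : ℕ) : ℝ) + 1 := by
      rw [Nat.cast_sub (le_trans hs (le_trans hmn hnL))]
    rw [this]; positivity
  -- Step 1: swap sums
  have step1 : ∑ t ∈ Finset.range (m+1),
      (-1:ℝ)^t * (poch ((n:ℝ) - L) (m-t) / poch ((n:ℝ)+2) (m-t))
        * (poch ((L:ℝ)+2-t) t / (Nat.factorial t : ℝ))
        * ((m:ℝ)+n+1-2*t) * racah k t m n
      = ∑ s ∈ range (k+1), ∑ t ∈ range (m+1),
          fterm s m n L t * (poch (-(k:ℝ)) s * poch ((k:ℝ)+1) s /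
            (poch 1 s * poch (-(m:ℝ)) s * poch (-(n:ℝ)) s * (Nat.factorial s : ℝ))) := by
    rw [Finset.sum_comm]
    apply Finset.sum_congr rfl
    intro t _
    rw [racah, Finset.mul_sum]
    apply Finset.sum_congr rfl
    intro s _
    rw [fterm]
    ring
  rw [step1]
  -- Step 2: evaluate inner sums and reduce to the Saalschütz sum
  have step2 : ∀ s ∈ range (k+1),
      ∑ t ∈ range (m+1), fterm s m n L t * (poch (-(k:ℝ)) s * poch ((k:ℝ)+1) s /
            (poch 1 s * poch (-(m:ℝ)) s * poch (-(n:ℝ)) s * (Nat.factorial s : ℝ)))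
      = ((-1:ℝ)^m * ((n:ℝ)+1) / (Nat.factorial m : ℝ) * poch ((L:ℝ)-m+1) (m-k))
        * (poch (-(k:ℝ)) s * poch ((k:ℝ)+1) s / ((Nat.factorial s : ℝ))^2
            * poch ((L:ℝ) - k + 1) (k-s) * poch ((L:ℝ) - s + 2) s) := by
    intro s hs
    rw [mem_range] at hs
    have hsk : s ≤ k := by omega
    have hsm : s ≤ m := by omega
    rw [← Finset.sum_mul]
    have hsum : ∑ t ∈ range (m+1), fterm s m n L t = gclosed s m n L m := by
      have h0 := gsum s (m-s) m n L (by omega) hmn hnL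
      rw [show s + (m-s) = m by omega] at h0
      exact h0
    rw [hsum, gclosed, show n+m-s-m = n-s by omega, show m-m = 0 by omega, poch_zero]
    -- split the L-pochhammer
    have hsplit : poch ((L:ℝ)-m+1) (m+1)
        = poch ((L:ℝ)-m+1) (m-k) * (poch ((L:ℝ)-k+1) (k-s)
            * (((L:ℝ)-s+1) * poch ((L:ℝ)-s+2) s)) := by
      rw [show m+1 = (m-k) + ((k-s) + (s+1)) by omega, poch_add,
        poch_congr (a := (L:ℝ)-m+1+((m-k:ℕ):ℝ)) (b := (L:ℝ)-k+1) ((k-s)+(s+1))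
          (by rw [Nat.cast_sub hkm]; ring),
        poch_add,
        poch_congr (a := (L:ℝ)-k+1+((k-s:ℕ):ℝ)) (b := (L:ℝ)-s+1) (s+1)
          (by rw [Nat.cast_sub hsk]; ring),
        poch_succ',
        poch_congr (a := (L:ℝ)-s+1+1) (b := (L:ℝ)-s+2) s (by ring)]
    rw [hsplit, poch_one, poch_neg_nat m s hsm, poch_neg_nat n s (le_trans hsm hmn)]
    have hf1 : (Nat.factorial s : ℝ) ≠ 0 := by exact_mod_cast Nat.factorial_ne_zero _
    have hf2 : (Nat.factorial m : ℝ) ≠ 0 := by exact_mod_cast Nat.factorial_ne_zero _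
    have hf3 : (Nat.factorial n : ℝ) ≠ 0 := by exact_mod_cast Nat.factorial_ne_zero _
    have hf4 : (Nat.factorial (m-s) : ℝ) ≠ 0 := by exact_mod_cast Nat.factorial_ne_zero _
    have hf5 : (Nat.factorial (n-s) : ℝ) ≠ 0 := by exact_mod_cast Nat.factorial_ne_zero _
    have hL := hLs s hsm
    rcases Nat.even_or_odd s with hpar | hpar
    · rw [Even.neg_one_pow hpar]; field_simp
    · rw [Odd.neg_one_pow hpar]; field_simp
  rw [Finset.sum_congr rfl step2, ← Finset.mul_sum, saalschutz k (L:ℝ)]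
  -- Step 3: final bookkeeping
  have e1 : poch ((L:ℝ)+2) k = (Nat.factorial (L+k+1) : ℝ) / (Nat.factorial (L+1) : ℝ) := by
    rw [poch_congr (a := (L:ℝ)+2) (b := ((L+1:ℕ):ℝ)+1) k (by push_cast; ring),
      poch_nat_div (L+1) k, show L+1+k = L+k+1 by omega]
  have e2 : poch ((L:ℝ)-m+1) (m-k)
      = (Nat.factorial (L-k) : ℝ) / (Nat.factorial (L-m) : ℝ) := by
    rw [poch_congr (a := (L:ℝ)-m+1) (b := ((L-m:ℕ):ℝ)+1) (m-k)
        (by rw [Nat.cast_sub (le_trans hmn hnL)]),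
      poch_nat_div (L-m) (m-k), show L-m+(m-k) = L-k by omega]
  rw [e1, e2, pow_add]
  have hf2 : (Nat.factorial m : ℝ) ≠ 0 := by exact_mod_cast Nat.factorial_ne_zero _
  have hf6 : (Nat.factorial (L-m) : ℝ) ≠ 0 := by exact_mod_cast Nat.factorial_ne_zero _
  have hf7 : (Nat.factorial (L+1) : ℝ) ≠ 0 := by exact_mod_cast Nat.factorial_ne_zero _
  field_simp
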